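/- Let C be a commutative Noetherian ring, A = C{a₁,…,a_ℓ} an affine C-algebra with A ⊆ M_n(K) for a commutative C-algebra K. If K is reduced, then every nil subalgebra N of A satisfies N^n = 0. -/

import Mathlib

set_option maxHeartbeats 1000000
set_option synthInstance.maxHeartbeats 400000

open Module

universe u

lemma aux_map_eq_self {F : Type*} {V : Type u} [Field F] [AddCommGroup V] [Module F V]
    (f : Module.End F V) (W : Submodule F V) (hf : IsNilpotent f)
    (hW : Submodule.map f W = W) : W = ⊥ := by
  obtain ⟨k, hk⟩ := hf
  have h : ∀ m : ℕ, Submodule.map (f ^ m) W = W := by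
    intro m
    induction m with
    | zero => rw [pow_zero, Module.End.one_eq_id]; exact Submodule.map_id W
    | succ m ih => rw [pow_succ, Module.End.mul_eq_comp, Submodule.map_comp, hW, ih]
  have h2 := h k
  rw [hk] at h2
  simpa using h2.symm

lemma field_case {F : Type*} [Field F] (d : ℕ) :
    ∀ (V : Type u) [AddCommGroup V] [Module F V] [FiniteDimensional F V],
    finrank F V ≤ d →
    ∀ S : Set (Module.End F V),
      (∀ a ∈ S, ∀ b ∈ S, a * b ∈ S) →
      (∀ a ∈ S, IsNilpotent a) →
      ∀ l : List (Module.End F V), (∀ x ∈ l, x ∈ S) → finrank F V ≤ l.length →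
        l.prod = 0 := by
  induction d with
  | zero =>
    intro V _ _ _ hd S hmul hnil l hl hlen
    have : Subsingleton V := by
      rw [← Module.finrank_zero_iff (R := F)]; omega
    exact Subsingleton.elim _ _
  | succ d ih =>
    intro V _ _ _ hd S hmul hnil l hl hlen
    classical
    by_cases hS : ∀ b ∈ S, b = 0
    · by_cases hV : finrank F V = 0
      · have : Subsingleton V := by rw [← Module.finrank_zero_iff (R := F)]; omega
        exact Subsingleton.elim _ _
      · have hpos : 0 < l.length := by omega
        obtain ⟨x, hx⟩ := List.exists_mem_of_length_pos hpos
        obtain ⟨s, t, rfl⟩ := List.append_of_mem hx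
        have hx0 : x = 0 := hS x (hl x hx)
        simp [List.prod_append, List.prod_cons, hx0]
    · push_neg at hS
      obtain ⟨a₀, ha₀S, ha₀⟩ := hS
      have hmin : ∃ a ∈ S, a ≠ 0 ∧ ∀ u : Module.End F V, (u = 1 ∨ u ∈ S) → a * u * a = 0 := by
        classical
        set ranks : Set ℕ := {k | ∃ b ∈ S, b ≠ 0 ∧ finrank F (LinearMap.range b) = k} with hranks
        have hne : ranks.Nonempty := ⟨_, a₀, ha₀S, ha₀, rfl⟩
        obtain ⟨a, haS, ha0, hra⟩ := Nat.sInf_mem hne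
        refine ⟨a, haS, ha0, ?_⟩
        intro u hu
        by_contra hb
        have hauS : a * u ∈ S := by
          rcases hu with rfl | hu
          · simpa using haS
          · exact hmul a haS u hu
        have hbS : a * u * a ∈ S := hmul _ hauS a haS
        have hble : LinearMap.range (a * u * a) ≤ LinearMap.range a := by
          rw [mul_assoc, Module.End.mul_eq_comp]
          exact LinearMap.range_comp_le_range _ _
        have hrle : sInf ranks ≤ finrank F (LinearMap.range (a * u * a)) :=
          Nat.sInf_le ⟨_, hbS, hb, rfl⟩
        have heq : LinearMap.range (a * u * a) = LinearMap.range a := by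
          refine Submodule.eq_of_le_of_finrank_le hble ?_
          rw [hra]; exact hrle
        have hmap : Submodule.map (a * u) (LinearMap.range a) = LinearMap.range a := by
          have h1 : LinearMap.range (a * u * a) = Submodule.map (a * u) (LinearMap.range a) := by
            rw [Module.End.mul_eq_comp, LinearMap.range_comp]
          rw [← h1, heq]
        have hnilau : IsNilpotent (a * u) := by
          rcases hu with rfl | hu
          · simpa using hnil a haS
          · exact hnil _ hauS
        have : LinearMap.range a = ⊥ := aux_map_eq_self _ _ hnilau hmap
        exact ha0 (LinearMap.range_eq_bot.mp this)
      obtain ⟨a, haS, ha0, key⟩ := hmin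
      have hWex : ∃ W : Submodule F V, W ≠ ⊥ ∧ W ≠ ⊤ ∧ ∀ s ∈ S, ∀ w ∈ W, s w ∈ W := by
        classical
        have hone : ∀ u v : Module.End F V, (u = 1 ∨ u ∈ S) → (v = 1 ∨ v ∈ S) →
            (u * v = 1 ∨ u * v ∈ S) := by
          rintro u v (rfl | hu) (rfl | hv)
          · simp
          · right; simpa using hv
          · right; simpa using hu
          · exact Or.inr (hmul u hu v hv)
        set T : Set (Module.End F V) :=
          {x | ∃ u v, (u = 1 ∨ u ∈ S) ∧ (v = 1 ∨ v ∈ S) ∧ x = u * a * v} with hT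
        have haT : a ∈ T := ⟨1, 1, Or.inl rfl, Or.inl rfl, by simp⟩
        have hTmul0 : ∀ x ∈ T, ∀ y ∈ T, x * y = 0 := by
          rintro _ ⟨u, v, hu, hv, rfl⟩ _ ⟨u', v', hu', hv', rfl⟩
          have hmid : a * (v * u') * a = 0 := key _ (hone v u' hv hu')
          have hre : u * a * v * (u' * a * v') = u * (a * (v * u') * a) * v' := by noncomm_ring
          rw [hre, hmid, mul_zero, zero_mul]
        have hST : ∀ s ∈ S, ∀ x ∈ T, s * x ∈ T := by
          rintro s hs _ ⟨u, v, hu, hv, rfl⟩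
          refine ⟨s * u, v, ?_, hv, by noncomm_ring⟩
          rcases hu with rfl | hu
          · exact Or.inr (by simpa using hs)
          · exact Or.inr (hmul s hs u hu)
        set W : Submodule F V := Submodule.span F {w | ∃ x ∈ T, ∃ v, x v = w} with hW
        have hWne : W ≠ ⊥ := by
          obtain ⟨v, hv⟩ : ∃ v, a v ≠ 0 := by
            by_contra h; push_neg at h
            exact ha0 (LinearMap.ext fun v => by simpa using h v)
          intro h
          have hmem : a v ∈ W := Submodule.subset_span ⟨a, haT, v, rfl⟩
          rw [h] at hmem
          exact hv (by simpa using hmem)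
        have hWinvle : Submodule.map a W ≤ ⊥ := by
          rw [hW, Submodule.map_span_le]
          rintro _ ⟨x, hx, v, rfl⟩
          have : (a * x) v = 0 := by rw [hTmul0 a haT x hx]; simp
          simpa [Module.End.mul_apply] using this
        have hWtop : W ≠ ⊤ := by
          intro h
          apply ha0
          ext v
          have := hWinvle ⟨v, by rw [h]; trivial, rfl⟩
          simpa using this
        refine ⟨W, hWne, hWtop, ?_⟩
        intro s hs w hw
        have hinv : Submodule.map s W ≤ W := by
          rw [hW, Submodule.map_span_le]
          rintro _ ⟨x, hx, v, rfl⟩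
          refine Submodule.subset_span ⟨s * x, hST s hs x hx, v, by simp [Module.End.mul_apply]⟩
        exact hinv ⟨w, hw, rfl⟩
      obtain ⟨W, hWne, hWtop, hWinv⟩ := hWex
      classical
      have hWlt : finrank F W < finrank F V := Submodule.finrank_lt hWtop
      have hq : finrank F (V ⧸ W) + finrank F W = finrank F V :=
        Submodule.finrank_quotient_add_finrank W
      have hm1 : 0 < finrank F W := by
        rcases Nat.eq_zero_or_pos (finrank F W) with h | h
        · exact absurd (Submodule.finrank_eq_zero.mp h) hWne
        · exact h
      set m := finrank F W with hm
      set q := finrank F (V ⧸ W) with hqdef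
      -- maps
      set ρ : Module.End F V → Module.End F W :=
        fun s => if h : ∀ x ∈ W, s x ∈ W then s.restrict h else 0 with hρ
      set σ : Module.End F V → Module.End F (V ⧸ W) :=
        fun s => if h : ∀ x ∈ W, s x ∈ W then Submodule.mapQ W W s h else 0 with hσ
      have hρ_apply : ∀ s ∈ S, ∀ w : W, ((ρ s) w : V) = s (w : V) := by
        intro s hs w
        have h : ∀ x ∈ W, s x ∈ W := fun x hx => hWinv s hs x hx
        simp [hρ, dif_pos h, LinearMap.restrict_apply]
      have hσ_apply : ∀ s ∈ S, ∀ v : V,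
          (σ s) (Submodule.Quotient.mk v) = Submodule.Quotient.mk (s v) := by
        intro s hs v
        have h : ∀ x ∈ W, s x ∈ W := fun x hx => hWinv s hs x hx
        simp [hσ, dif_pos h, Submodule.mapQ_apply]
      have hρmul : ∀ s ∈ S, ∀ t ∈ S, ρ s * ρ t = ρ (s * t) := by
        intro s hs t ht
        ext w
        rw [Module.End.mul_apply, hρ_apply s hs, hρ_apply t ht,
          hρ_apply _ (hmul s hs t ht), Module.End.mul_apply]
      have hσmul : ∀ s ∈ S, ∀ t ∈ S, σ s * σ t = σ (s * t) := by
        intro s hs t ht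
        refine Submodule.linearMap_qext _ ?_
        ext v
        simp only [LinearMap.comp_apply, Submodule.mkQ_apply, Module.End.mul_apply]
        rw [hσ_apply t ht, hσ_apply s hs, hσ_apply (s*t) (hmul s hs t ht)]
        simp [Module.End.mul_apply]
      have hρpow : ∀ s ∈ S, ∀ k : ℕ, ∀ w : W, (((ρ s) ^ k) w : V) = (s ^ k) (w : V) := by
        intro s hs k
        induction k with
        | zero => intro w; simp
        | succ k ihk =>
          intro w
          rw [pow_succ, Module.End.mul_apply, pow_succ, Module.End.mul_apply,
            ihk ((ρ s) w), hρ_apply s hs w]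
      have hσpow : ∀ s ∈ S, ∀ k : ℕ, ∀ v : V,
          ((σ s) ^ k) (Submodule.Quotient.mk v) = Submodule.Quotient.mk ((s ^ k) v) := by
        intro s hs k
        induction k with
        | zero => intro v; simp
        | succ k ihk =>
          intro v
          rw [pow_succ', Module.End.mul_apply, pow_succ', Module.End.mul_apply,
            ihk v, hσ_apply s hs]
      have hρnil : ∀ s ∈ S, IsNilpotent (ρ s) := by
        intro s hs
        obtain ⟨k, hk⟩ := hnil s hs
        exact ⟨k, by ext w; rw [hρpow s hs k w, hk]; simp⟩
      have hσnil : ∀ s ∈ S, IsNilpotent (σ s) := by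
        intro s hs
        obtain ⟨k, hk⟩ := hnil s hs
        refine ⟨k, Submodule.linearMap_qext _ ?_⟩
        ext v
        simp only [LinearMap.comp_apply, Submodule.mkQ_apply]
        rw [hσpow s hs k v, hk]
        simp
      -- list transfer
      have hρprod : ∀ L : List (Module.End F V), (∀ x ∈ L, x ∈ S) → ∀ w : W,
          (((L.map ρ).prod) w : V) = L.prod (w : V) := by
        intro L
        induction L with
        | nil => intro _ w; simp
        | cons s L ihL =>
          intro hL w
          have hs : s ∈ S := hL s (by simp)
          have hLmem : ∀ x ∈ L, x ∈ S := fun x hx => hL x (by simp [hx])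
          simp only [List.map_cons, List.prod_cons, Module.End.mul_apply]
          rw [hρ_apply s hs, ihL hLmem w]
      have hσprod : ∀ L : List (Module.End F V), (∀ x ∈ L, x ∈ S) → ∀ v : V,
          ((L.map σ).prod) (Submodule.Quotient.mk v) = Submodule.Quotient.mk (L.prod v) := by
        intro L
        induction L with
        | nil => intro _ v; simp
        | cons s L ihL =>
          intro hL v
          have hs : s ∈ S := hL s (by simp)
          have hLmem : ∀ x ∈ L, x ∈ S := fun x hx => hL x (by simp [hx])
          simp only [List.map_cons, List.prod_cons, Module.End.mul_apply]
          rw [ihL hLmem v, hσ_apply s hs]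
      -- split the list
      have hql : q ≤ l.length := by omega
      set l₁ := l.take (l.length - q) with hl₁
      set l₂ := l.drop (l.length - q) with hl₂
      have hlen₁ : l₁.length = l.length - q := by
        rw [hl₁, List.length_take]; omega
      have hlen₂ : l₂.length = q := by
        rw [hl₂, List.length_drop]; omega
      have hl₁mem : ∀ x ∈ l₁, x ∈ S := fun x hx => hl x (List.take_subset _ _ hx)
      have hl₂mem : ∀ x ∈ l₂, x ∈ S := fun x hx => hl x (List.drop_subset _ _ hx)
      -- apply ih on quotient
      have hq0 : (l₂.map σ).prod = 0 := by
        refine ih (V ⧸ W) (by omega) (σ '' S) ?_ ?_ _ ?_ ?_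
        · rintro _ ⟨s, hs, rfl⟩ _ ⟨t, ht, rfl⟩
          rw [hσmul s hs t ht]
          exact ⟨s * t, hmul s hs t ht, rfl⟩
        · rintro _ ⟨s, hs, rfl⟩; exact hσnil s hs
        · intro x hx
          obtain ⟨y, hy, rfl⟩ := List.mem_map.mp hx
          exact ⟨y, hl₂mem y hy, rfl⟩
        · rw [List.length_map, hlen₂]
      have hw0 : (l₁.map ρ).prod = 0 := by
        refine ih W (by omega) (ρ '' S) ?_ ?_ _ ?_ ?_
        · rintro _ ⟨s, hs, rfl⟩ _ ⟨t, ht, rfl⟩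
          rw [hρmul s hs t ht]
          exact ⟨s * t, hmul s hs t ht, rfl⟩
        · rintro _ ⟨s, hs, rfl⟩; exact hρnil s hs
        · intro x hx
          obtain ⟨y, hy, rfl⟩ := List.mem_map.mp hx
          exact ⟨y, hl₁mem y hy, rfl⟩
        · rw [List.length_map, hlen₁]; omega
      -- conclude
      ext v
      have hsplit : l₁ ++ l₂ = l := List.take_append_drop _ l
      have hmemW : l₂.prod v ∈ W := by
        have h1 := hσprod l₂ hl₂mem v
        rw [hq0] at h1
        simpa [Submodule.Quotient.mk_eq_zero] using h1.symm
      have h2 := hρprod l₁ hl₁mem ⟨l₂.prod v, hmemW⟩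
      rw [hw0] at h2
      have h3 : l.prod v = l₁.prod (l₂.prod v) := by
        rw [← hsplit, List.prod_append, Module.End.mul_apply]
      rw [h3, ← h2]
      simp

/-- Let `C` be a commutative Noetherian ring and `A` an affine (finitely generated)
`C`-subalgebra of `M_n(K)` for a commutative `C`-algebra `K`.  If `K` is reduced, then
every nil subalgebra `N` of `A` satisfies `N^n = 0`: any product of `n` elements of `N`
vanishes. -/
theorem stmt_8 (C : Type*) [CommRing C] [IsNoetherianRing C]
    (K : Type*) [CommRing K] [Algebra C K] [IsReduced K] (n : ℕ)
    (A : Subalgebra C (Matrix (Fin n) (Fin n) K)) (hA : A.FG)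
    (N : NonUnitalSubalgebra C (Matrix (Fin n) (Fin n) K))
    (hNA : (N : Set (Matrix (Fin n) (Fin n) K)) ⊆ (A : Set (Matrix (Fin n) (Fin n) K)))
    (hnil : ∀ a ∈ N, IsNilpotent a) :
    ∀ f : Fin n → Matrix (Fin n) (Fin n) K, (∀ i, f i ∈ N) → (List.ofFn f).prod = 0 := by
  intro f hf
  set P := (List.ofFn f).prod with hP
  have hmem : ∀ p : Ideal K, p.IsPrime → ∀ i j, P i j ∈ p := by
    intro p hp i j
    haveI := hp
    set Kp := K ⧸ p
    set F := FractionRing Kp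
    set φ : K →+* F := (algebraMap Kp F).comp (Ideal.Quotient.mk p) with hφ
    set Φ : Matrix (Fin n) (Fin n) K →+* Matrix (Fin n) (Fin n) F := φ.mapMatrix with hΦ
    set e : Matrix (Fin n) (Fin n) F ≃ₐ[F] Module.End F (Fin n → F) :=
      Matrix.toLinAlgEquiv' with he
    set Ψ : Matrix (Fin n) (Fin n) K →+* Module.End F (Fin n → F) :=
      (e.toRingEquiv.toRingHom).comp Φ with hΨ
    set S : Set (Module.End F (Fin n → F)) := Ψ '' (N : Set (Matrix (Fin n) (Fin n) K)) with hS
    have hmulS : ∀ a ∈ S, ∀ b ∈ S, a * b ∈ S := by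
      rintro _ ⟨x, hx, rfl⟩ _ ⟨y, hy, rfl⟩
      exact ⟨x * y, mul_mem hx hy, by rw [map_mul]⟩
    have hnilS : ∀ a ∈ S, IsNilpotent a := by
      rintro _ ⟨x, hx, rfl⟩
      exact (hnil x hx).map Ψ
    have h0 : (List.ofFn fun i => Ψ (f i)).prod = 0 := by
      refine field_case n (Fin n → F) (le_of_eq (finrank_fin_fun F)) S hmulS hnilS _ ?_ ?_
      · intro x hx
        obtain ⟨i, rfl⟩ := List.mem_ofFn.mp hx
        exact ⟨f i, hf i, rfl⟩
      · rw [List.length_ofFn, finrank_fin_fun F]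
    have hΨP : Ψ P = 0 := by
      show Ψ (List.ofFn f).prod = 0
      rw [map_list_prod Ψ, List.map_ofFn]
      exact h0
    have h1 : e (Φ P) = 0 := hΨP
    have hΦP : Φ P = 0 := by
      have h2 := congrArg e.symm h1
      simpa using h2
    have hφij : φ (P i j) = 0 := by
      have h3 := congrArg (fun M => M i j) hΦP
      simpa [hΦ, RingHom.mapMatrix_apply, Matrix.map_apply] using h3
    have : Ideal.Quotient.mk p (P i j) = 0 := by
      apply IsFractionRing.injective Kp F
      rw [map_zero]
      exact hφij
    exact (Ideal.Quotient.eq_zero_iff_mem).mp this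
  have hPij : ∀ i j, P i j = 0 := by
    intro i j
    have hmem2 : P i j ∈ nilradical K := by
      rw [nilradical_eq_sInf]
      exact Submodule.mem_sInf.mpr fun q hq => hmem q hq i j
    rw [nilradical_eq_zero] at hmem2
    simpa using hmem2
  ext i j
  simp [hPij i j]
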